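/- For a finite simple graph G with vertex set V, the optimal value of the vertex cover LP relaxation equals (|V| + min(0, minsurp(G)))/2, where minsurp(G) is the minimum over all nonempty independent sets I of |N(I)| - |I|. -/

import Mathlib

open Finset

/-- `I` is an independent set of vertices in `G`. -/
def IsIndep {V : Type*} (G : SimpleGraph V) (I : Finset V) : Prop :=
  ∀ u ∈ I, ∀ v ∈ I, ¬ G.Adj u v

open Classical in
/-- The (open) neighborhood `N(I)` of a vertex set `I`. -/
noncomputable def nbr {V : Type*} [Fintype V] (G : SimpleGraph V) (I : Finset V) : Finset V :=
  Finset.univ.filter (fun v => v ∉ I ∧ ∃ u ∈ I, G.Adj u v)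

/-- The surplus `|N(I)| - |I|` of a vertex set `I`. -/
noncomputable def surp {V : Type*} [Fintype V] (G : SimpleGraph V) (I : Finset V) : ℤ :=
  ((nbr G I).card : ℤ) - (I.card : ℤ)

/-- `minsurp G`: the minimum surplus over nonempty independent sets. -/
noncomputable def minsurp {V : Type*} [Fintype V] (G : SimpleGraph V) : ℤ :=
  sInf {z : ℤ | ∃ I : Finset V, I.Nonempty ∧ IsIndep G I ∧ z = surp G I}

/-- `θ` is a fractional vertex cover of `G` (feasible point of the VC LP). -/
def IsFracCover {V : Type*} (G : SimpleGraph V) (θ : V → ℝ) : Prop :=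
  (∀ v, 0 ≤ θ v ∧ θ v ≤ 1) ∧ ∀ u v, G.Adj u v → 1 ≤ θ u + θ v

/-- The optimal value of the vertex cover LP relaxation. -/
noncomputable def lpOpt {V : Type*} [Fintype V] (G : SimpleGraph V) : ℝ :=
  sInf {x : ℝ | ∃ θ : V → ℝ, IsFracCover G θ ∧ x = ∑ v, θ v}

open MeasureTheory

/-! ### Auxiliary integral lemmas -/

lemma intInt (c : ℝ) : IntervalIntegrable (fun t => if t ≤ c then (1:ℝ) else 0) volume 0 1 := by
  have hfun : (fun t => if t ≤ c then (1:ℝ) else 0) = (Set.Iic c).indicator (fun _ => (1:ℝ)) := by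
    funext t; simp [Set.indicator, Set.mem_Iic]
  rw [intervalIntegrable_iff, hfun, Set.uIoc_of_le zero_le_one]
  exact IntegrableOn.indicator (integrableOn_const measure_Ioc_lt_top.ne) measurableSet_Iic

lemma integ_ite (c : ℝ) (hc : c ≤ 1) :
    ∫ t in (0:ℝ)..1, (if t ≤ c then (1:ℝ) else 0) = max c 0 := by
  have hfun : (fun t => if t ≤ c then (1:ℝ) else 0) = (Set.Iic c).indicator (fun _ => (1:ℝ)) := by
    funext t; simp [Set.indicator, Set.mem_Iic]
  rw [intervalIntegral.integral_of_le zero_le_one, hfun,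
    MeasureTheory.integral_indicator measurableSet_Iic]
  rw [MeasureTheory.setIntegral_const, smul_eq_mul, mul_one,
    measureReal_def, Measure.restrict_apply measurableSet_Iic]
  have hset : Set.Iic c ∩ Set.Ioc 0 1 = Set.Ioc 0 c := by
    ext x; simp only [Set.mem_inter_iff, Set.mem_Iic, Set.mem_Ioc]
    constructor
    · rintro ⟨h1, h2, h3⟩; exact ⟨h2, h1⟩
    · rintro ⟨h1, h2⟩; exact ⟨h2, h1, h2.trans hc⟩
  rw [hset, Real.volume_Ioc]
  rcases le_total c 0 with h | h
  · rw [max_eq_right h, ENNReal.ofReal_eq_zero.2 (by linarith), ENNReal.toReal_zero]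
  · rw [max_eq_left h, ENNReal.toReal_ofReal (by linarith)]; ring

lemma integ_vertex (a : ℝ) (h1 : -1 ≤ a) (h2 : a ≤ 1) :
    ∫ t in (0:ℝ)..1, ((if t ≤ a then (1:ℝ) else 0) - (if t ≤ -a then 1 else 0)) = a := by
  rw [intervalIntegral.integral_sub (intInt a) (intInt (-a)), integ_ite a h2,
    integ_ite (-a) (by linarith)]
  rcases le_total a 0 with h | h
  · rw [max_eq_right h, max_eq_left (by linarith)]; ring
  · rw [max_eq_left h, max_eq_right (by linarith)]; ring

/-! ### Surplus lemmas -/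

section Surp
variable {V : Type*} [Fintype V] (G : SimpleGraph V)

lemma minsurp_bddBelow :
    BddBelow {z : ℤ | ∃ I : Finset V, I.Nonempty ∧ IsIndep G I ∧ z = surp G I} := by
  refine ⟨-(Fintype.card V : ℤ), ?_⟩
  rintro z ⟨I, -, -, rfl⟩
  have h1 : (I.card : ℤ) ≤ (Fintype.card V : ℤ) := by exact_mod_cast Finset.card_le_univ I
  have h0 : (0:ℤ) ≤ ((nbr G I).card : ℤ) := Int.ofNat_nonneg _
  simp only [surp]; linarith

lemma minsurp_le {I : Finset V} (hne : I.Nonempty) (hind : IsIndep G I) :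
    minsurp G ≤ surp G I :=
  csInf_le (minsurp_bddBelow G) ⟨I, hne, hind, rfl⟩

/-- key counting bound -/
lemma surplus_bound {I J : Finset V} (hind : IsIndep G I) (hN : nbr G I ⊆ J) :
    (min 0 (minsurp G) : ℤ) ≤ (J.card : ℤ) - (I.card : ℤ) := by
  rcases I.eq_empty_or_nonempty with rfl | hne
  · simp only [Finset.card_empty, Nat.cast_zero, sub_zero]
    exact (min_le_left _ _).trans (Int.ofNat_nonneg _)
  · calc (min 0 (minsurp G) : ℤ) ≤ minsurp G := min_le_right _ _
      _ ≤ surp G I := minsurp_le G hne hind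
      _ ≤ (J.card : ℤ) - (I.card : ℤ) := by
          have := Finset.card_le_card hN
          simp only [surp]; omega

end Surp

/-! ### The lower bound -/

set_option maxHeartbeats 1000000 in
open Classical in
lemma lower_bound {V : Type*} [Fintype V] (G : SimpleGraph V) (θ : V → ℝ)
    (hθ : IsFracCover G θ) :
    ((Fintype.card V : ℝ) + ((min 0 (minsurp G) : ℤ) : ℝ)) / 2 ≤ ∑ v, θ v := by
  set m : ℤ := min 0 (minsurp G) with hm
  set g : V → ℝ → ℝ :=
    fun v t => (if t ≤ 2 * θ v - 1 then (1:ℝ) else 0) - (if t ≤ -(2 * θ v - 1) then 1 else 0)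
    with hg
  have hInt : ∀ v : V, IntervalIntegrable (g v) volume 0 1 :=
    fun v => (intInt (2 * θ v - 1)).sub (intInt (-(2 * θ v - 1)))
  have hv : ∀ v : V, ∫ t in (0:ℝ)..1, g v t = 2 * θ v - 1 := by
    intro v
    have h1 := (hθ.1 v).1; have h2 := (hθ.1 v).2
    exact integ_vertex (2 * θ v - 1) (by linarith) (by linarith)
  -- pointwise bound
  have hpt : ∀ t ∈ Set.Icc (0:ℝ) 1, ((m:ℝ)) ≤ ∑ v, g v t := by
    intro t ht
    have hsum : ∑ v, g v t =
        ((Finset.univ.filter (fun v => t ≤ 2 * θ v - 1)).card : ℝ)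
        - ((Finset.univ.filter (fun v => t ≤ -(2 * θ v - 1))).card : ℝ) := by
      rw [hg]; rw [Finset.sum_sub_distrib]
      simp [Finset.sum_boole]
    rcases eq_or_lt_of_le ht.1 with h0 | h0
    · -- t = 0 case
      set I : Finset V := Finset.univ.filter (fun v => θ v < 1/2) with hI
      set J : Finset V := Finset.univ.filter (fun v => 1/2 < θ v) with hJ
      have hind : IsIndep G I := by
        intro u hu v hv hadj
        simp only [hI, Finset.mem_filter] at hu hv
        have := hθ.2 u v hadj; linarith [hu.2, hv.2]
      have hN : nbr G I ⊆ J := by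
        intro v hvmem
        simp only [nbr, Finset.mem_filter] at hvmem
        obtain ⟨-, -, u, hu, hadj⟩ := hvmem
        simp only [hI, Finset.mem_filter] at hu
        have := hθ.2 u v hadj
        simp only [hJ, Finset.mem_filter]
        exact ⟨Finset.mem_univ _, by linarith [hu.2]⟩
      have hkey := surplus_bound G hind hN
      have hA : (Finset.univ.filter (fun v => t ≤ 2 * θ v - 1)).card
          = Fintype.card V - I.card := by
        have heq : Finset.univ.filter (fun v => t ≤ 2 * θ v - 1) = Finset.univ \ I := by
          ext v
          rw [← h0]
          simp only [hI, Finset.mem_filter, Finset.mem_sdiff, Finset.mem_univ, true_and, not_lt]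
          constructor
          · intro h; linarith
          · intro h; linarith
        rw [heq, Finset.card_sdiff_of_subset (Finset.subset_univ _), Finset.card_univ]
      have hB : (Finset.univ.filter (fun v => t ≤ -(2 * θ v - 1))).card
          = Fintype.card V - J.card := by
        have heq : Finset.univ.filter (fun v => t ≤ -(2 * θ v - 1)) = Finset.univ \ J := by
          ext v
          rw [← h0]
          simp only [hJ, Finset.mem_filter, Finset.mem_sdiff, Finset.mem_univ, true_and, not_lt]
          constructor
          · intro h; linarith
          · intro h; linarith
        rw [heq, Finset.card_sdiff_of_subset (Finset.subset_univ _), Finset.card_univ]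
      rw [hsum, hA, hB]
      have hIle : I.card ≤ Fintype.card V := Finset.card_le_univ _
      have hJle : J.card ≤ Fintype.card V := Finset.card_le_univ _
      have hfin : (m:ℤ) ≤ ((Fintype.card V - I.card : ℕ) : ℤ)
          - ((Fintype.card V - J.card : ℕ) : ℤ) := by
        rw [hm]; omega
      exact_mod_cast hfin
    · -- t > 0 case
      set I : Finset V := Finset.univ.filter (fun v => t ≤ -(2 * θ v - 1)) with hI
      set J : Finset V := Finset.univ.filter (fun v => t ≤ 2 * θ v - 1) with hJ
      have hind : IsIndep G I := by
        intro u hu v hv hadj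
        simp only [hI, Finset.mem_filter] at hu hv
        have := hθ.2 u v hadj; linarith [hu.2, hv.2]
      have hN : nbr G I ⊆ J := by
        intro v hvmem
        simp only [nbr, Finset.mem_filter] at hvmem
        obtain ⟨-, -, u, hu, hadj⟩ := hvmem
        simp only [hI, Finset.mem_filter] at hu
        have := hθ.2 u v hadj
        simp only [hJ, Finset.mem_filter]
        exact ⟨Finset.mem_univ _, by linarith [hu.2]⟩
      have hkey := surplus_bound G hind hN
      rw [hsum]
      exact_mod_cast hkey
  have hswap : ∑ v, (2 * θ v - 1) = ∫ t in (0:ℝ)..1, ∑ v, g v t := by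
    rw [intervalIntegral.integral_finset_sum (fun v _ => hInt v)]
    exact Finset.sum_congr rfl (fun v _ => (hv v).symm)
  have hkey2 : ((m:ℝ)) ≤ ∑ v, (2 * θ v - 1) := by
    rw [hswap]
    calc ((m:ℝ)) = ∫ _ in (0:ℝ)..1, ((m:ℝ)) := by simp
      _ ≤ ∫ t in (0:ℝ)..1, ∑ v, g v t := by
          have hIs : IntervalIntegrable (fun t => ∑ v, g v t) volume 0 1 := by
            have h := IntervalIntegrable.sum Finset.univ (fun v (_ : v ∈ Finset.univ) => hInt v)
            have heq : (fun t => ∑ v, g v t) = (∑ i : V, g i) := by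
              funext t; simp [Finset.sum_apply]
            rw [heq]; exact h
          exact intervalIntegral.integral_mono_on zero_le_one
            intervalIntegrable_const hIs hpt
  have hexp : ∑ v, (2 * θ v - 1) = 2 * ∑ v, θ v - (Fintype.card V : ℝ) := by
    rw [Finset.sum_sub_distrib, ← Finset.mul_sum]
    simp [Finset.card_univ]
  rw [hexp] at hkey2
  linarith


/-- The LP optimum equals `(|V| + min(0, minsurp G)) / 2`. -/
theorem lpOpt_eq_half_card_add_minsurp {V : Type*} [Fintype V] (G : SimpleGraph V) :
    lpOpt G = ((Fintype.card V : ℝ) + ((min 0 (minsurp G) : ℤ) : ℝ)) / 2 := by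
  classical
  set c : ℝ := ((Fintype.card V : ℝ) + ((min 0 (minsurp G) : ℤ) : ℝ)) / 2 with hc
  set S : Set ℝ := {x : ℝ | ∃ θ : V → ℝ, IsFracCover G θ ∧ x = ∑ v, θ v} with hS
  have hbdd : BddBelow S := ⟨c, by rintro x ⟨θ, hθ, rfl⟩; exact lower_bound G θ hθ⟩
  have hne : S.Nonempty :=
    ⟨∑ v, (1:ℝ), fun _ => 1,
      ⟨fun v => ⟨zero_le_one, le_refl 1⟩, fun u v _ => by norm_num⟩, rfl⟩
  have hub : c ∈ S := by
    rcases le_or_gt 0 (minsurp G) with hpos | hneg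
    · refine ⟨fun _ => 1/2, ⟨fun v => by norm_num, fun u v _ => by norm_num⟩, ?_⟩
      rw [hc, min_eq_left hpos]
      simp [Finset.sum_const, Finset.card_univ, nsmul_eq_mul]
      ring
    · have hsetne : {z : ℤ | ∃ I : Finset V, I.Nonempty ∧ IsIndep G I ∧ z = surp G I}.Nonempty := by
        by_contra h
        rw [Set.not_nonempty_iff_eq_empty] at h
        rw [minsurp, h, Int.csInf_empty] at hneg
        exact lt_irrefl 0 hneg
      have hmem : minsurp G ∈ {z : ℤ | ∃ I : Finset V, I.Nonempty ∧ IsIndep G I ∧ z = surp G I} := by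
        rw [minsurp]; exact Int.csInf_mem hsetne (minsurp_bddBelow G)
      obtain ⟨I, hIne, hind, hsurp⟩ := hmem
      set θ0 : V → ℝ :=
        fun v => 1/2 + (if v ∈ nbr G I then 1/2 else 0) - (if v ∈ I then 1/2 else 0) with hθ0
      have hInbr : ∀ v ∈ I, v ∉ nbr G I := by
        intro v hv hmemv
        simp only [nbr, Finset.mem_filter] at hmemv
        exact hmemv.2.1 hv
      refine ⟨θ0, ⟨?_, ?_⟩, ?_⟩
      · intro v; rw [hθ0]; dsimp only
        split_ifs <;> norm_num
      · intro u v hadj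
        by_cases hu : u ∈ I
        · have hvI : v ∉ I := fun hv => hind u hu v hv hadj
          have hvN : v ∈ nbr G I := by
            simp only [nbr, Finset.mem_filter]
            exact ⟨Finset.mem_univ _, hvI, u, hu, hadj⟩
          rw [hθ0]; dsimp only
          rw [if_pos hvN, if_neg hvI, if_neg (hInbr u hu), if_pos hu]; norm_num
        · by_cases hv : v ∈ I
          · have huN : u ∈ nbr G I := by
              simp only [nbr, Finset.mem_filter]
              exact ⟨Finset.mem_univ _, hu, v, hv, hadj.symm⟩
            rw [hθ0]; dsimp only
            rw [if_pos huN, if_neg hu, if_neg (hInbr v hv), if_pos hv]; norm_num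
          · rw [hθ0]; dsimp only
            rw [if_neg hu, if_neg hv]
            split_ifs <;> norm_num
      · have hSsum : ∀ T : Finset V, ∑ v, (if v ∈ T then (1/2:ℝ) else 0) = T.card * (1/2) := by
          intro T
          rw [Finset.sum_ite_mem, Finset.univ_inter, Finset.sum_const, nsmul_eq_mul]
        have hsum0 : ∑ v, θ0 v
            = (Fintype.card V : ℝ) * (1/2) + (nbr G I).card * (1/2) - I.card * (1/2) := by
          rw [hθ0]; dsimp only
          rw [Finset.sum_sub_distrib, Finset.sum_add_distrib, Finset.sum_const,
            Finset.card_univ, hSsum, hSsum, nsmul_eq_mul]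
        rw [hsum0, hc, min_eq_right hneg.le, hsurp]
        simp only [surp]
        push_cast
        ring
  have h1 : lpOpt G ≤ c := csInf_le hbdd hub
  have h2 : c ≤ lpOpt G := le_csInf hne (by rintro x ⟨θ, hθ, rfl⟩; exact lower_bound G θ hθ)
  exact le_antisymm h1 h2
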